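/- Let G and H be as in the edge-colouring-to-digraph conversion: H is a digraph on V(G) whose base graph is a subgraph of the edge-coloured graph G, such that for every vertex u the edges from u to its H-out-neighbourhood are rainbow in G, and for every directed edge uv of H at most √n in-neighbours w of u satisfy c(uw) = c(uv). Then, for each vertex v, there are at most 3n^{3/2} three-element sets S containing v such that every pair of S is joined by a directed edge of H and every vertex of S has an H-out-neighbour inside S, yet the triangle G[S] is not rainbow. -/

import Mathlib

lemma sum_fiber {α β : Type*} [Fintype α] [Fintype β] (S : Set (α × β)) (B : ℝ)
    (hB : ∀ p : α, (({q | (p, q) ∈ S}).ncard : ℝ) ≤ B) :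
    (S.ncard : ℝ) ≤ (Fintype.card α : ℝ) * B := by
  classical
  have h1 : S.ncard = ∑ p : α, (S.toFinset.filter (fun x => x.1 = p)).card := by
    rw [Set.ncard_eq_toFinset_card']
    exact Finset.card_eq_sum_card_fiberwise (fun x _ => Finset.mem_univ _)
  have h2 : ∀ p : α, (S.toFinset.filter (fun x => x.1 = p)).card
      = ({q | (p, q) ∈ S}).ncard := by
    intro p
    rw [Set.ncard_eq_toFinset_card']
    apply Finset.card_bij (fun x _ => x.2)
    · rintro ⟨a, b⟩ hx
      simp only [Finset.mem_filter, Set.mem_toFinset] at hx ⊢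
      obtain ⟨h, rfl⟩ := hx
      simpa using h
    · rintro ⟨a, b⟩ hx ⟨a', b'⟩ hx' h
      simp only [Finset.mem_filter, Set.mem_toFinset] at hx hx'
      simp_all [Prod.ext_iff]
    · intro q hq
      refine ⟨(p, q), ?_, rfl⟩
      simp only [Finset.mem_filter, Set.mem_toFinset] at hq ⊢
      simpa using hq
  calc (S.ncard : ℝ) = ∑ p : α, (({q | (p, q) ∈ S}).ncard : ℝ) := by
        rw [h1]; push_cast; exact Finset.sum_congr rfl (fun p _ => by rw [h2 p])
    _ ≤ ∑ _p : α, B := Finset.sum_le_sum (fun p _ => hB p)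
    _ = (Fintype.card α : ℝ) * B := by
        rw [Finset.sum_const, nsmul_eq_mul, Finset.card_univ]


/-- For the digraph `H` obtained from an edge-coloured graph `G`, each vertex `v` lies
in at most `3n^{3/2}` triples `S ∈ K_{3,1}(H)` such that `G[S]` is not rainbow. -/
theorem stmt_15 (n : ℕ) (G : SimpleGraph (Fin n)) (c : Fin n → Fin n → ℕ)
    (hsym : ∀ u v, c u v = c v u)
    (H : Fin n → Fin n → Prop) (hirr : ∀ v, ¬ H v v)
    (hbase : ∀ u v, H u v → G.Adj u v)
    (hrb : ∀ u v w, H u v → H u w → v ≠ w → c u v ≠ c u w)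
    (hfew : ∀ u v, H u v → (Set.ncard {w | H w u ∧ c u w = c u v} : ℝ) ≤ Real.sqrt n)
    (hpairs : ∀ v : Fin n,
      Set.ncard {p : Fin n × Fin n | H p.1 v ∧ H v p.2 ∧ c p.1 v = c v p.2} ≤ n) :
    ∀ v : Fin n,
      (Set.ncard {S : Finset (Fin n) | v ∈ S ∧ S.card = 3 ∧
        (∀ a ∈ S, ∀ b ∈ S, a ≠ b → H a b ∨ H b a) ∧ (∀ a ∈ S, ∃ b ∈ S, H a b) ∧
        (∃ a ∈ S, ∃ b ∈ S, ∃ d ∈ S, a ≠ b ∧ a ≠ d ∧ b ≠ d ∧ c a b = c a d)} : ℝ)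
      ≤ 3 * (n : ℝ) ^ ((3 : ℝ) / 2) := by
  intro v
  classical
  rcases Nat.eq_zero_or_pos n with rfl | hn
  · exact v.elim0
  have hn1 : (1 : ℝ) ≤ n := by exact_mod_cast hn
  set T1 : Set (Fin n × Fin n) :=
    {x | H v x.1 ∧ H x.2 v ∧ c v x.1 = c v x.2} with hT1def
  set T2 : Set (Fin n × Fin n) :=
    {x | H x.1 v ∧ H x.2 x.1 ∧ c x.1 v = c x.1 x.2} with hT2def
  set T3 : Set (Fin n × Fin n) :=
    {x | H v x.1 ∧ H x.1 x.2 ∧ c x.1 x.2 = c x.1 v} with hT3def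
  set g : Fin n × Fin n → Finset (Fin n) := fun x => {v, x.1, x.2} with hgdef
  -- the main structural claim
  have hsub : {S : Finset (Fin n) | v ∈ S ∧ S.card = 3 ∧
        (∀ a ∈ S, ∀ b ∈ S, a ≠ b → H a b ∨ H b a) ∧ (∀ a ∈ S, ∃ b ∈ S, H a b) ∧
        (∃ a ∈ S, ∃ b ∈ S, ∃ d ∈ S, a ≠ b ∧ a ≠ d ∧ b ≠ d ∧ c a b = c a d)}
      ⊆ g '' (T1 ∪ T2 ∪ T3) := by
    rintro S ⟨hvS, hcard, hpair, hout, a, haS, b, hbS, d, hdS, hab, had, hbd, hc⟩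
    have hSeq : ({a, b, d} : Finset (Fin n)) = S := by
      apply Finset.eq_of_subset_of_card_le
      · intro x hx
        simp only [Finset.mem_insert, Finset.mem_singleton] at hx
        rcases hx with rfl | rfl | rfl <;> assumption
      · rw [hcard]
        rw [Finset.card_insert_of_notMem (by simp [hab, had]),
          Finset.card_insert_of_notMem (by simp [hbd]), Finset.card_singleton]
    -- apex structure
    obtain ⟨p, q, hS2, hp, hq, hcol, hap, haq, hpq⟩ :
        ∃ p q, ({a, p, q} : Finset (Fin n)) = S ∧ H a p ∧ H q a ∧ c a p = c a q ∧
          a ≠ p ∧ a ≠ q ∧ p ≠ q := by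
      obtain ⟨t, htS, hat⟩ := hout a haS
      have ht : t = b ∨ t = d := by
        rw [← hSeq] at htS
        simp only [Finset.mem_insert, Finset.mem_singleton] at htS
        rcases htS with h | h | h
        · exact absurd (h ▸ hat) (hirr a)
        · exact Or.inl h
        · exact Or.inr h
      rcases ht with h | h
      · -- H a b; so ¬ H a d, hence H d a
        rw [h] at hat
        have hda : H d a := by
          rcases hpair a haS d hdS had with h | h
          · exact absurd hc (hrb a b d hat h hbd)
          · exact h
        exact ⟨b, d, hSeq, hat, hda, hc, hab, had, hbd⟩
      · -- H a d; so H b a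
        rw [h] at hat
        have hba : H b a := by
          rcases hpair a haS b hbS hab with h | h
          · exact absurd hc.symm (hrb a d b hat h (Ne.symm hbd))
          · exact h
        exact ⟨d, b, by rw [← hSeq]; ext z; simp; tauto, hat, hba, hc.symm,
          had, hab, Ne.symm hbd⟩
    have hvS2 : v = a ∨ v = p ∨ v = q := by
      rw [← hS2] at hvS
      simpa using hvS
    rcases hvS2 with rfl | rfl | rfl
    · exact ⟨(p, q), Or.inl (Or.inl ⟨hp, hq, hcol⟩), by rw [hgdef]; exact hS2⟩
    · refine ⟨(a, q), Or.inl (Or.inr ⟨hp, hq, hcol⟩), ?_⟩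
      rw [← hS2, hgdef]; ext z; simp; tauto
    · refine ⟨(a, p), Or.inr ⟨hq, hp, hcol⟩, ?_⟩
      rw [← hS2, hgdef]; ext z; simp; tauto
  -- cardinality bounds
  have hb1 : (T1.ncard : ℝ) ≤ n * Real.sqrt n := by
    have := sum_fiber T1 (Real.sqrt n) ?_
    · simpa using this
    · intro p
      by_cases hvp : H v p
      · refine le_trans ?_ (hfew v p hvp)
        have hsubf : {q | (p, q) ∈ T1} ⊆ {w | H w v ∧ c v w = c v p} := by
          rintro q ⟨_, hq, hcq⟩; exact ⟨hq, hcq.symm⟩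
        exact_mod_cast Nat.cast_le.2 (Set.ncard_le_ncard hsubf (Set.toFinite _))
      · have : {q | (p, q) ∈ T1} = ∅ := by
          ext q; simp only [Set.mem_setOf_eq, Set.mem_empty_iff_false, iff_false]
          rintro ⟨h, _⟩; exact hvp h
        rw [this]; simpa using Real.sqrt_nonneg (n : ℝ)
  have hb2 : (T2.ncard : ℝ) ≤ n * Real.sqrt n := by
    have := sum_fiber T2 (Real.sqrt n) ?_
    · simpa using this
    · intro a
      by_cases hav : H a v
      · refine le_trans ?_ (hfew a v hav)
        have hsubf : {q | (a, q) ∈ T2} ⊆ {w | H w a ∧ c a w = c a v} := by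
          rintro q ⟨_, hq, hcq⟩; exact ⟨hq, hcq.symm⟩
        exact_mod_cast Nat.cast_le.2 (Set.ncard_le_ncard hsubf (Set.toFinite _))
      · have : {q | (a, q) ∈ T2} = ∅ := by
          ext q; simp only [Set.mem_setOf_eq, Set.mem_empty_iff_false, iff_false]
          rintro ⟨h, _⟩; exact hav h
        rw [this]; simpa using Real.sqrt_nonneg (n : ℝ)
  have hb3 : (T3.ncard : ℝ) ≤ n := by
    have hinj : Set.InjOn Prod.fst T3 := by
      rintro ⟨a, p⟩ ⟨ha1, ha2, ha3⟩ ⟨a', p'⟩ ⟨hb1', hb2', hb3'⟩ h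
      simp only at h
      subst h
      have : p = p' := by
        by_contra hne
        exact hrb a p p' ha2 hb2' hne (ha3.trans hb3'.symm)
      simp [this]
    have : T3.ncard ≤ n := by
      rw [← Set.ncard_image_of_injOn hinj]
      refine le_trans (Set.ncard_le_ncard (Set.subset_univ _) (Set.toFinite _)) ?_
      simp [Set.ncard_univ]
    exact_mod_cast this
  have hmain : ({S : Finset (Fin n) | v ∈ S ∧ S.card = 3 ∧
        (∀ a ∈ S, ∀ b ∈ S, a ≠ b → H a b ∨ H b a) ∧ (∀ a ∈ S, ∃ b ∈ S, H a b) ∧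
        (∃ a ∈ S, ∃ b ∈ S, ∃ d ∈ S, a ≠ b ∧ a ≠ d ∧ b ≠ d ∧ c a b = c a d)}).ncard
      ≤ T1.ncard + T2.ncard + T3.ncard := by
    calc _ ≤ (g '' (T1 ∪ T2 ∪ T3)).ncard := Set.ncard_le_ncard hsub (Set.toFinite _)
      _ ≤ (T1 ∪ T2 ∪ T3).ncard := Set.ncard_image_le (Set.toFinite _)
      _ ≤ (T1 ∪ T2).ncard + T3.ncard := Set.ncard_union_le _ _
      _ ≤ T1.ncard + T2.ncard + T3.ncard := by
          exact Nat.add_le_add_right (Set.ncard_union_le _ _) _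
  have hrpow : (n : ℝ) ^ ((3 : ℝ) / 2) = n * Real.sqrt n := by
    rw [show (3 : ℝ) / 2 = 1 + 1 / 2 by norm_num,
      Real.rpow_add (by positivity), Real.rpow_one,
      ← Real.sqrt_eq_rpow]
  have hs1 : (1 : ℝ) ≤ Real.sqrt n := by
    rw [show (1 : ℝ) = Real.sqrt 1 by simp]
    exact Real.sqrt_le_sqrt hn1
  have hcast : (({S : Finset (Fin n) | v ∈ S ∧ S.card = 3 ∧
        (∀ a ∈ S, ∀ b ∈ S, a ≠ b → H a b ∨ H b a) ∧ (∀ a ∈ S, ∃ b ∈ S, H a b) ∧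
        (∃ a ∈ S, ∃ b ∈ S, ∃ d ∈ S, a ≠ b ∧ a ≠ d ∧ b ≠ d ∧ c a b = c a d)}).ncard : ℝ)
      ≤ (T1.ncard : ℝ) + T2.ncard + T3.ncard := by exact_mod_cast hmain
  rw [hrpow]
  nlinarith [hb1, hb2, hb3, hcast, hs1, hn1, Real.sqrt_nonneg (n : ℝ)]
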